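/- Let γ be a probability measure and H ≤ b̄ a bounded measurable function with mean Ĥ = ∫H dγ < b̄ and variance s² = Var_γ(H) > 0. Then for every c > 0, the risk-sensitive performance measure Λ_γ(c, H) := (1/c) log ∫ e^{c(H−Ĥ)} dγ satisfies Λ_γ(c, H) ≤ (1/c) log( ((b̄−Ĥ)²/((b̄−Ĥ)²+s²)) e^{−c s²/(b̄−Ĥ)} + (s²/((b̄−Ĥ)²+s²)) e^{c(b̄−Ĥ)} ). -/

import Mathlib

open MeasureTheory

private lemma exp_tsum (x : ℝ) : Real.exp x = ∑' n : ℕ, x ^ n / n.factorial := by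
  rw [Real.exp_eq_exp_ℝ, NormedSpace.exp_eq_tsum_div]

private lemma exp_sub_tsum (x : ℝ) :
    Real.exp x - 1 - x = ∑' n : ℕ, x ^ (n + 2) / (n + 2).factorial := by
  have h := Summable.sum_add_tsum_nat_add 2 (Real.summable_pow_div_factorial x)
  rw [exp_tsum x, ← h]
  simp [Finset.sum_range_succ]
  ring

private lemma exp_quad_bound {L u : ℝ} (hL : 0 < L) (hu : u ≤ L) :
    Real.exp u ≤ 1 + u + u ^ 2 * ((Real.exp L - 1 - L) / L ^ 2) := by
  have hM : (1:ℝ)/2 ≤ (Real.exp L - 1 - L) / L ^ 2 := by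
    rw [le_div_iff₀ (by positivity)]
    nlinarith [Real.quadratic_le_exp_of_nonneg hL.le]
  rcases le_or_gt u 0 with h0 | h0
  · have h1 : 1 + (-u) + (-u) ^ 2 / 2 ≤ Real.exp (-u) := Real.quadratic_le_exp_of_nonneg (by linarith)
    have hmul : Real.exp u * Real.exp (-u) = 1 := by rw [← Real.exp_add]; simp
    have hq : Real.exp u ≤ 1 + u + u ^ 2 / 2 := by
      nlinarith [Real.exp_pos u, Real.exp_pos (-u), sq_nonneg u, sq_nonneg (u*u)]
    nlinarith [sq_nonneg u]
  · have hsum : Summable (fun n : ℕ => u ^ (n + 2) / (n + 2).factorial) :=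
      (summable_nat_add_iff 2).mpr (Real.summable_pow_div_factorial u)
    have hsumL : Summable (fun n : ℕ => u ^ 2 / L ^ 2 * (L ^ (n + 2) / (n + 2).factorial)) :=
      ((summable_nat_add_iff 2).mpr (Real.summable_pow_div_factorial L)).mul_left _
    have hterm : ∀ n : ℕ, u ^ (n + 2) / (n + 2).factorial
        ≤ u ^ 2 / L ^ 2 * (L ^ (n + 2) / (n + 2).factorial) := by
      intro n
      have h1 : u ^ (n + 2) ≤ u ^ 2 * L ^ n := by
        have := pow_le_pow_left₀ h0.le hu n
        calc u ^ (n + 2) = u ^ 2 * u ^ n := by ring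
          _ ≤ u ^ 2 * L ^ n := by nlinarith [sq_nonneg u]
      have heq : u ^ 2 / L ^ 2 * (L ^ (n + 2) / (n + 2).factorial)
          = u ^ 2 * L ^ n / (n + 2).factorial := by
        field_simp
        ring
      rw [heq]
      gcongr
    have := Summable.tsum_le_tsum hterm hsum hsumL
    rw [tsum_mul_left] at this
    rw [← exp_sub_tsum u, ← exp_sub_tsum L] at this
    have heq2 : u ^ 2 * ((Real.exp L - 1 - L) / L ^ 2) = u ^ 2 / L ^ 2 * (Real.exp L - 1 - L) := by
      ring
    linarith [this, heq2.ge]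

/-- Concentration bound for the risk-sensitive performance measure. -/
theorem concentration_risk_sensitive {Ω : Type*} [MeasurableSpace Ω]
    (gam : Measure Ω) [IsProbabilityMeasure gam]
    (H : Ω → ℝ) (hH : Measurable H) (hInt : Integrable H gam)
    (bbar : ℝ) (hb : ∀ᵐ x ∂gam, H x ≤ bbar)
    (Hhat : ℝ) (hHhat : ∫ x, H x ∂gam = Hhat) (hlt : Hhat < bbar)
    (s2 : ℝ) (hs2 : ∫ x, (H x - Hhat) ^ 2 ∂gam = s2) (hs2pos : 0 < s2)
    (c : ℝ) (hc : 0 < c) :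
    (1 / c) * Real.log (∫ x, Real.exp (c * (H x - Hhat)) ∂gam) ≤
      (1 / c) * Real.log
        ((bbar - Hhat) ^ 2 / ((bbar - Hhat) ^ 2 + s2) * Real.exp (-c * s2 / (bbar - Hhat))
          + s2 / ((bbar - Hhat) ^ 2 + s2) * Real.exp (c * (bbar - Hhat))) := by
  set B : ℝ := bbar - Hhat with hBdef
  have hB : 0 < B := by simp only [hBdef]; linarith
  set a : ℝ := s2 / B with hadef
  have ha : 0 < a := div_pos hs2pos hB
  have haB : a * B = s2 := div_mul_cancel₀ _ hB.ne'
  set L : ℝ := c * (B + a) with hLdef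
  have hLpos : 0 < L := by positivity
  set K : ℝ := (Real.exp L - 1 - L) / (B + a) ^ 2 with hKdef
  -- pointwise bound
  have hpt : ∀ᵐ x ∂gam, Real.exp (c * (H x - Hhat)) ≤
      Real.exp (-(c * a)) * (1 + c * (H x - Hhat + a) + K * (H x - Hhat + a) ^ 2) := by
    filter_upwards [hb] with x hx
    set t : ℝ := H x - Hhat + a with htdef
    have hu : c * t ≤ L := by
      rw [hLdef]
      have : t ≤ B + a := by simp only [htdef, hBdef]; linarith
      nlinarith
    have hbd := exp_quad_bound hLpos hu
    have hK : (c * t) ^ 2 * ((Real.exp L - 1 - L) / L ^ 2) = K * t ^ 2 := by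
      rw [hKdef, hLdef]
      have hBa : B + a ≠ 0 := by positivity
      field_simp
    rw [hK] at hbd
    have hsplit : Real.exp (c * (H x - Hhat)) = Real.exp (-(c * a)) * Real.exp (c * t) := by
      rw [← Real.exp_add]
      congr 1
      simp only [htdef]
      ring
    rw [hsplit]
    have := mul_le_mul_of_nonneg_left hbd (Real.exp_pos (-(c * a))).le
    linarith [this]
  -- integrability
  have hIntX : Integrable (fun x => H x - Hhat) gam := hInt.sub (integrable_const _)
  have hIntX2 : Integrable (fun x => (H x - Hhat) ^ 2) gam := by
    by_contra h
    rw [integral_undef h] at hs2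
    linarith
  have hIntExp : Integrable (fun x => Real.exp (c * (H x - Hhat))) gam := by
    apply Integrable.mono' (integrable_const (Real.exp (c * B)))
    · exact (Real.measurable_exp.comp (measurable_const.mul (hH.sub measurable_const))).aestronglyMeasurable
    · filter_upwards [hb] with x hx
      rw [Real.norm_eq_abs, abs_of_pos (Real.exp_pos _)]
      apply Real.exp_le_exp.mpr
      have : H x - Hhat ≤ B := by simp only [hBdef]; linarith
      nlinarith
  have hIntT : Integrable (fun x => 1 + c * (H x - Hhat + a) + K * (H x - Hhat + a) ^ 2) gam := by
    have h1 : Integrable (fun x => (H x - Hhat + a) ^ 2) gam := by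
      have heq : (fun x => (H x - Hhat + a) ^ 2)
          = fun x => (H x - Hhat) ^ 2 + (2 * a) * (H x - Hhat) + a ^ 2 := by
        funext x; ring
      rw [heq]
      exact (hIntX2.add (hIntX.const_mul _)).add (integrable_const _)
    have h2 : Integrable (fun x => c * (H x - Hhat + a)) gam :=
      (hIntX.add (integrable_const a)).const_mul c
    have h3 : Integrable (fun x => 1 + c * (H x - Hhat + a)) gam := (integrable_const 1).add h2
    exact h3.add (h1.const_mul K)
  have hIntq : Integrable (fun x => Real.exp (-(c * a))
      * (1 + c * (H x - Hhat + a) + K * (H x - Hhat + a) ^ 2)) gam := hIntT.const_mul _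
  -- integral computations
  have hX0 : ∫ x, (H x - Hhat) ∂gam = 0 := by
    rw [integral_sub hInt (integrable_const _), hHhat, integral_const]
    simp
  have hXa : ∫ x, (H x - Hhat + a) ∂gam = a := by
    rw [integral_add hIntX (integrable_const _), hX0, integral_const]
    simp
  have hXa2 : ∫ x, (H x - Hhat + a) ^ 2 ∂gam = s2 + a ^ 2 := by
    have heq : (fun x => (H x - Hhat + a) ^ 2)
        = fun x => (H x - Hhat) ^ 2 + (2 * a) * (H x - Hhat) + a ^ 2 := by
      funext x; ring
    have h2 : Integrable (fun x => 2 * a * (H x - Hhat)) gam := hIntX.const_mul _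
    have h12 : Integrable (fun x => (H x - Hhat) ^ 2 + 2 * a * (H x - Hhat)) gam := hIntX2.add h2
    rw [heq, integral_add h12 (integrable_const _), integral_add hIntX2 h2,
      integral_const_mul, hX0, hs2, integral_const]
    simp
  have hIq : ∫ x, Real.exp (-(c * a))
      * (1 + c * (H x - Hhat + a) + K * (H x - Hhat + a) ^ 2) ∂gam
      = Real.exp (-(c * a)) * (1 + c * a + K * (s2 + a ^ 2)) := by
    rw [integral_const_mul]
    congr 1
    have hsq : Integrable (fun x => (H x - Hhat + a) ^ 2) gam := by
      have heq : (fun x => (H x - Hhat + a) ^ 2)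
          = fun x => (H x - Hhat) ^ 2 + (2 * a) * (H x - Hhat) + a ^ 2 := by
        funext x; ring
      rw [heq]
      exact (hIntX2.add (hIntX.const_mul _)).add (integrable_const _)
    have h2 : Integrable (fun x => c * (H x - Hhat + a)) gam :=
      (hIntX.add (integrable_const a)).const_mul c
    have h3 : Integrable (fun x => 1 + c * (H x - Hhat + a)) gam := (integrable_const 1).add h2
    have h4 : Integrable (fun x => K * (H x - Hhat + a) ^ 2) gam := hsq.const_mul K
    rw [integral_add h3 h4, integral_add (integrable_const 1) h2,
      integral_const_mul, integral_const_mul, hXa, hXa2, integral_const]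
    simp
  -- the algebraic identity
  have halg : Real.exp (-(c * a)) * (1 + c * a + K * (s2 + a ^ 2))
      = B ^ 2 / (B ^ 2 + s2) * Real.exp (-c * s2 / B)
        + s2 / (B ^ 2 + s2) * Real.exp (c * B) := by
    have h1 : Real.exp L = Real.exp (c * B) * Real.exp (c * a) := by
      rw [← Real.exp_add, hLdef]; ring_nf
    have h2 : Real.exp (-(c * a)) = (Real.exp (c * a))⁻¹ := by
      rw [← Real.exp_neg]
    have h3 : Real.exp (-c * s2 / B) = (Real.exp (c * a))⁻¹ := by
      rw [← Real.exp_neg]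
      congr 1
      rw [hadef]
      field_simp
    rw [hKdef, h1, h2, h3, ← haB]
    have hBa : B + a ≠ 0 := by positivity
    have hE : Real.exp (c * a) ≠ 0 := (Real.exp_pos _).ne'
    have hB2 : B ^ 2 + a * B ≠ 0 := by positivity
    field_simp
    ring
  -- conclude
  have hle : ∫ x, Real.exp (c * (H x - Hhat)) ∂gam
      ≤ B ^ 2 / (B ^ 2 + s2) * Real.exp (-c * s2 / B)
        + s2 / (B ^ 2 + s2) * Real.exp (c * B) := by
    calc ∫ x, Real.exp (c * (H x - Hhat)) ∂gam
        ≤ ∫ x, Real.exp (-(c * a))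
            * (1 + c * (H x - Hhat + a) + K * (H x - Hhat + a) ^ 2) ∂gam :=
          integral_mono_ae hIntExp hIntq hpt
      _ = _ := by rw [hIq, halg]
  have hpos : 0 < ∫ x, Real.exp (c * (H x - Hhat)) ∂gam :=
    integral_exp_pos hIntExp
  apply mul_le_mul_of_nonneg_left _ (by positivity : (0:ℝ) ≤ 1 / c)
  exact Real.log_le_log hpos hle
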